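/- Let H be an m×m Hankel matrix, r < m, and H̃ the associated (2m-r-1)×(r+1) rectangular Hankel matrix. Then for a point x, rank H(x) ≤ p if and only if rank H̃(x) ≤ p, for every p ≤ r. In particular rank H(x) = p iff rank H̃(x) = p. -/
import Mathlib

open Matrix Module

/-- Hankel matrix of shape `a × b` built from the sequence `h`. -/
noncomputable def hmat (h : ℕ → ℂ) (a b : ℕ) : Matrix (Fin a) (Fin b) ℂ :=
  fun i j => h (i.1 + j.1)

lemma hmat_rank_comm (h : ℕ → ℂ) (a b : ℕ) :
    (hmat h a b).rank = (hmat h b a).rank := by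
  have ht : (hmat h a b)ᵀ = hmat h b a := by
    ext i j
    simp [hmat, Matrix.transpose_apply, Nat.add_comm]
  rw [← ht, Matrix.rank_transpose]

/-- Pad a vector with a zero at the end. -/
def padEnd (b : ℕ) : (Fin (b + 1) → ℂ) →ₗ[ℂ] (Fin (b + 2) → ℂ) where
  toFun v := Fin.snoc v 0
  map_add' u v := by
    funext j
    induction j using Fin.lastCases <;> simp
  map_smul' c v := by
    funext j
    induction j using Fin.lastCases <;> simp

/-- Pad a vector with a zero at the beginning (shift). -/
def padStart (b : ℕ) : (Fin (b + 1) → ℂ) →ₗ[ℂ] (Fin (b + 2) → ℂ) where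
  toFun v := Fin.cons 0 v
  map_add' u v := by
    funext j
    induction j using Fin.cases <;> simp
  map_smul' c v := by
    funext j
    induction j using Fin.cases <;> simp

@[simp] lemma padEnd_castSucc (b : ℕ) (v : Fin (b + 1) → ℂ) (j : Fin (b + 1)) :
    padEnd b v j.castSucc = v j := by
  simp [padEnd]

@[simp] lemma padEnd_last (b : ℕ) (v : Fin (b + 1) → ℂ) :
    padEnd b v (Fin.last (b + 1)) = 0 := by
  simp [padEnd]

@[simp] lemma padStart_zero (b : ℕ) (v : Fin (b + 1) → ℂ) :
    padStart b v 0 = 0 := by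
  simp [padStart]

@[simp] lemma padStart_succ (b : ℕ) (v : Fin (b + 1) → ℂ) (j : Fin (b + 1)) :
    padStart b v j.succ = v j := by
  simp [padStart]

/-- Padding a nonzero subspace at both ends increases dimension. -/
lemma padSup_finrank (b : ℕ) (V : Submodule ℂ (Fin (b + 1) → ℂ)) (hVne : V ≠ ⊥) :
    finrank ℂ V + 1 ≤ finrank ℂ ↥(V.map (padEnd b) ⊔ V.map (padStart b)) := by
  classical
  have he₀inj : Function.Injective (padEnd b) := by
    intro u v huv
    funext j
    have := congrFun huv j.castSucc
    rwa [padEnd_castSucc, padEnd_castSucc] at this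
  have hdim0 : finrank ℂ (V.map (padEnd b)) = finrank ℂ V :=
    (LinearEquiv.finrank_eq (Submodule.equivMapOfInjective (padEnd b) he₀inj V)).symm
  have key : ∃ t : Fin (b + 1),
      (∃ v ∈ V, v t ≠ 0) ∧ (∀ u ∈ V, ∀ j : Fin (b + 1), (t : ℕ) < (j : ℕ) → u j = 0) := by
    obtain ⟨v₀, hv₀V, hv₀ne⟩ := Submodule.exists_mem_ne_zero_of_ne_bot hVne
    have hSne : (Finset.univ.filter (fun j : Fin (b + 1) => ∃ v ∈ V, v j ≠ 0)).Nonempty := by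
      obtain ⟨j, hj⟩ := Function.ne_iff.1 hv₀ne
      exact ⟨j, Finset.mem_filter.2 ⟨Finset.mem_univ _, v₀, hv₀V, hj⟩⟩
    set S := Finset.univ.filter (fun j : Fin (b + 1) => ∃ v ∈ V, v j ≠ 0) with hSdef
    refine ⟨S.max' hSne, (Finset.mem_filter.1 (S.max'_mem hSne)).2, ?_⟩
    intro u hu j hj
    by_contra hne
    have hjS : j ∈ S := Finset.mem_filter.2 ⟨Finset.mem_univ _, u, hu, hne⟩
    have := S.le_max' j hjS
    omega
  obtain ⟨t, ⟨vt, hvtV, hvtne⟩, hmaxt⟩ := key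
  have hnotmem : padStart b vt ∉ V.map (padEnd b) := by
    rintro ⟨u, huV, hequ⟩
    have heval := congrFun hequ t.succ
    rw [padStart_succ] at heval
    by_cases hlt : (t : ℕ) + 1 < b + 1
    · have hcast : t.succ = (⟨(t : ℕ) + 1, hlt⟩ : Fin (b + 1)).castSucc := by
        apply Fin.ext
        simp
      rw [hcast, padEnd_castSucc] at heval
      have hu0 : u ⟨(t : ℕ) + 1, hlt⟩ = 0 := hmaxt u huV _ (by simp)
      rw [hu0] at heval
      exact hvtne heval.symm
    · have hlast : t.succ = Fin.last (b + 1) := by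
        apply Fin.ext
        simp only [Fin.val_succ, Fin.val_last]
        omega
      rw [hlast, padEnd_last] at heval
      exact hvtne heval.symm
  have hltW : V.map (padEnd b) < V.map (padEnd b) ⊔ V.map (padStart b) := by
    refine lt_of_le_of_ne le_sup_left (fun hEq => hnotmem ?_)
    rw [hEq]
    exact Submodule.mem_sup_right ⟨vt, hvtV, rfl⟩
  have := Submodule.finrank_lt_finrank_of_lt hltW
  omega

lemma hmat_step (h : ℕ → ℂ) (a b p : ℕ) (hp : p ≤ b)
    (hA : (hmat h (a + 2) (b + 1)).rank ≤ p) :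
    (hmat h (a + 1) (b + 2)).rank ≤ p := by
  classical
  set A := hmat h (a + 2) (b + 1) with hAdef
  set B := hmat h (a + 1) (b + 2) with hBdef
  set V := LinearMap.ker A.mulVecLin with hVdef
  have hrnA : A.rank + finrank ℂ V = b + 1 := by
    have := LinearMap.finrank_range_add_finrank_ker A.mulVecLin
    rw [Module.finrank_fin_fun] at this
    simpa [Matrix.rank] using this
  have hVpos : 1 ≤ finrank ℂ V := by omega
  have hVne : V ≠ ⊥ := by
    intro hbot
    rw [hbot, finrank_bot] at hVpos
    omega
  have hkerA : ∀ v ∈ V, ∀ i : Fin (a + 2),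
      ∑ j : Fin (b + 1), h (i.1 + j.1) * v j = 0 := by
    intro v hv i
    have := congrFun ((LinearMap.mem_ker).1 hv) i
    simpa [Matrix.mulVecLin_apply, Matrix.mulVec, dotProduct, hAdef, hmat] using this
  have he₀ : ∀ v ∈ V, padEnd b v ∈ LinearMap.ker B.mulVecLin := by
    intro v hv
    rw [LinearMap.mem_ker]
    funext i
    have hBv : (B.mulVecLin (padEnd b v)) i
        = ∑ j : Fin (b + 2), h (i.1 + j.1) * padEnd b v j := by
      simp [Matrix.mulVecLin_apply, Matrix.mulVec, dotProduct, hBdef, hmat]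
    rw [hBv, Fin.sum_univ_castSucc, padEnd_last, mul_zero, add_zero]
    have hterm : ∀ j : Fin (b + 1),
        h (i.1 + ((j.castSucc : Fin (b + 2)) : ℕ)) * padEnd b v j.castSucc
          = h ((⟨i.1, by omega⟩ : Fin (a + 2)).1 + j.1) * v j := by
      intro j
      rw [padEnd_castSucc, Fin.coe_castSucc]
    rw [Finset.sum_congr rfl fun j _ => hterm j]
    exact hkerA v hv _
  have he₁ : ∀ v ∈ V, padStart b v ∈ LinearMap.ker B.mulVecLin := by
    intro v hv
    rw [LinearMap.mem_ker]
    funext i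
    have hBv : (B.mulVecLin (padStart b v)) i
        = ∑ j : Fin (b + 2), h (i.1 + j.1) * padStart b v j := by
      simp [Matrix.mulVecLin_apply, Matrix.mulVec, dotProduct, hBdef, hmat]
    rw [hBv, Fin.sum_univ_succ, padStart_zero, mul_zero, zero_add]
    have hterm : ∀ j : Fin (b + 1),
        h (i.1 + ((j.succ : Fin (b + 2)) : ℕ)) * padStart b v j.succ
          = h ((⟨i.1 + 1, by omega⟩ : Fin (a + 2)).1 + j.1) * v j := by
      intro j
      rw [padStart_succ]
      have h2 : i.1 + ((j.succ : Fin (b + 2)) : ℕ) = (i.1 + 1) + j.1 := by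
        simp [Fin.val_succ]
        omega
      rw [h2]
    rw [Finset.sum_congr rfl fun j _ => hterm j]
    exact hkerA v hv _
  have hdim := padSup_finrank b V hVne
  have hWker : V.map (padEnd b) ⊔ V.map (padStart b) ≤ LinearMap.ker B.mulVecLin := by
    apply sup_le
    · rintro w ⟨v, hv, rfl⟩; exact he₀ v hv
    · rintro w ⟨v, hv, rfl⟩; exact he₁ v hv
  have hkerBdim : finrank ℂ V + 1 ≤ finrank ℂ (LinearMap.ker B.mulVecLin) :=
    le_trans hdim (Submodule.finrank_mono hWker)
  have hrnB : B.rank + finrank ℂ (LinearMap.ker B.mulVecLin) = b + 2 := by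
    have := LinearMap.finrank_range_add_finrank_ker B.mulVecLin
    rw [Module.finrank_fin_fun] at this
    simpa [Matrix.rank] using this
  omega

lemma hmat_chain (h : ℕ → ℂ) (p d : ℕ) :
    ∀ a b, p ≤ b → (hmat h (a + 1 + d) (b + 1)).rank ≤ p →
      (hmat h (a + 1) (b + 1 + d)).rank ≤ p := by
  induction d with
  | zero => intro a b _ hA; simpa using hA
  | succ d ih =>
    intro a b hb hA
    have h1 : (hmat h (a + d + 2) (b + 1)).rank ≤ p := by
      rw [show a + d + 2 = a + 1 + (d + 1) by omega]; exact hA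
    have h2 := hmat_step h (a + d) b p hb h1
    have h3 : (hmat h (a + 1 + d) (b + 1 + 1)).rank ≤ p := by
      rw [show a + 1 + d = a + d + 1 by omega]; exact h2
    have h4 := ih a (b + 1) (le_trans hb (Nat.le_succ b)) h3
    rw [show b + 1 + (d + 1) = b + 1 + 1 + d by omega]
    exact h4



/-- Let `H(x)` be an `n`-variate linear Hankel matrix of size `m`
(entries are the affine-linear forms `hv k (x) = a k 0 + ∑ ℓ x ℓ * a k (ℓ+1)` evaluated
at a point `x`, arranged with constant skew diagonals), `r < m`, and `H̃(x)` the associated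
`(2m - r - 1) × (r + 1)` rectangular Hankel matrix with the same entries.  Then for every
`p ≤ r`, `rank H(x) ≤ p` if and only if `rank H̃(x) ≤ p`; in particular
`rank H(x) = p` iff `rank H̃(x) = p`. -/
theorem rank_hankel_iff_rank_rect_hankel (m n r : ℕ) (hr : r < m)
    (a : ℕ → Fin (n + 1) → ℂ) (x : Fin n → ℂ)
    (hv : ℕ → ℂ) (hhv : ∀ k, hv k = a k 0 + ∑ ℓ : Fin n, x ℓ * a k ℓ.succ)
    (H : Matrix (Fin m) (Fin m) ℂ) (hH : ∀ i j, H i j = hv (i.1 + j.1))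
    (tH : Matrix (Fin (2 * m - r - 1)) (Fin (r + 1)) ℂ)
    (htH : ∀ i j, tH i j = hv (i.1 + j.1)) :
    ∀ p ≤ r, (H.rank ≤ p ↔ tH.rank ≤ p) ∧ (H.rank = p ↔ tH.rank = p) := by
  have hHe : H = hmat hv m m := by ext i j; rw [hH]; rfl
  have htHe : tH = hmat hv (2 * m - r - 1) (r + 1) := by ext i j; rw [htH]; rfl
  set d := m - 1 - r with hd
  have main : ∀ p ≤ r, (H.rank ≤ p ↔ tH.rank ≤ p) := by
    intro p hp
    constructor
    · intro hHp
      have h1 : (hmat hv (r + 1 + d) (m - 1 + 1)).rank ≤ p := by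
        rw [show r + 1 + d = m by omega, show m - 1 + 1 = m by omega, ← hHe]
        exact hHp
      have h2 := hmat_chain hv p d r (m - 1) (by omega) h1
      rw [htHe, hmat_rank_comm]
      rw [show 2 * m - r - 1 = m - 1 + 1 + d by omega]
      exact h2
    · intro htHp
      have h1 : (hmat hv (m - 1 + 1 + d) (r + 1)).rank ≤ p := by
        rw [show m - 1 + 1 + d = 2 * m - r - 1 by omega, ← htHe]
        exact htHp
      have h2 := hmat_chain hv p d (m - 1) r hp h1
      rw [hHe]
      rw [show m = m - 1 + 1 by omega]
      rw [show r + 1 + d = m - 1 + 1 by omega] at h2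
      exact h2
  intro p hp
  refine ⟨main p hp, ?_⟩
  have h1 := main p hp
  by_cases hp0 : p = 0
  · subst hp0
    constructor
    · intro he; have := h1.1 (le_of_eq he); omega
    · intro he; have := h1.2 (le_of_eq he); omega
  · have h2 := main (p - 1) (by omega)
    constructor
    · intro he
      have ha : tH.rank ≤ p := h1.1 (le_of_eq he)
      have hb : ¬ tH.rank ≤ p - 1 := fun hc => by
        have := h2.2 hc; omega
      omega
    · intro he
      have ha : H.rank ≤ p := h1.2 (le_of_eq he)
      have hb : ¬ H.rank ≤ p - 1 := fun hc => by
        have := h2.1 hc; omega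
      omega
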